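/- General upper bound for the minimum posterior standard deviation: fix any integer T̄ ≥ 2 and let (λ_t)_{t ≥ T̄} be a sequence of strictly positive reals such that γ_t(λ_t²) ≤ (t − 1)/3 for every integer t ≥ T̄. Then for every integer T ≥ T̄ and every sequence x₁, …, x_T ∈ X, min_{t ∈ {1, …, T}} σ(x_t; X_{t−1}) ≤ λ_T, where X_{t−1} = (x₁, …, x_{t−1}). -/

import Mathlib

open Matrix

noncomputable section

/-- Gram matrix `K = [k(x_i, x_j)]` of the kernel `k` on the finite family `xs`. -/
def gram {X ι : Type*} [Fintype ι] (k : X → X → ℝ) (xs : ι → X) :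
    Matrix ι ι ℝ := fun i j => k (xs i) (xs j)

/-- Kernel vector `k_t(x) = (k(x₁, x), …, k(x_t, x))`. -/
def kvec {X ι : Type*} [Fintype ι] (k : X → X → ℝ) (xs : ι → X) (x : X) :
    ι → ℝ := fun i => k (xs i) x

/-- Regularized posterior variance `σ²_{λ²}(x; xs) = k(x,x) - k_t(x)ᵀ (K + λ² I)⁻¹ k_t(x)`.
For the empty family this is `k(x,x)`. -/
def postVar {X ι : Type*} [Fintype ι] [DecidableEq ι] (k : X → X → ℝ)
    (xs : ι → X) (lam : ℝ) (x : X) : ℝ :=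
  k x x - kvec k xs x ⬝ᵥ ((gram k xs + lam ^ 2 • (1 : Matrix ι ι ℝ))⁻¹ *ᵥ kvec k xs x)

/-- Noise-free posterior standard deviation `σ(x; xs) = inf_{λ > 0} σ_{λ²}(x; xs)`. -/
def postStd {X ι : Type*} [Fintype ι] [DecidableEq ι] (k : X → X → ℝ)
    (xs : ι → X) (x : X) : ℝ :=
  ⨅ lam : {l : ℝ // 0 < l}, Real.sqrt (postVar k xs lam.1 x)

/-- Maximum information gain `γ_T(λ²) = sup_{x₁,…,x_T} (1/2) ln det (I_T + λ⁻² K_T)`,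
a value in `[0, ∞]`. -/
def mig {X : Type*} (k : X → X → ℝ) (T : ℕ) (lam : ℝ) : ENNReal :=
  ⨆ xs : Fin T → X, ENNReal.ofReal
    ((1 / 2) * Real.log ((1 + (lam ^ 2)⁻¹ • gram k xs).det))

/-- The prefix `X_{t-1} = (x₁, …, x_{t-1})` of a finite sequence (`t` is 0-indexed). -/
def pre {X : Type*} {T : ℕ} (xs : Fin T → X) (t : Fin T) : Fin t.1 → X :=
  fun i => xs ⟨i.1, i.2.trans t.2⟩

/-- Noise-free posterior mean `μ(x; xs) = k_t(x)ᵀ K⁻¹ (f(x₁), …, f(x_t))ᵀ`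
(for the empty family this is `0`). -/
def postMean {X ι : Type*} [Fintype ι] [DecidableEq ι] (k : X → X → ℝ)
    (xs : ι → X) (f : X → ℝ) (x : X) : ℝ :=
  kvec k xs x ⬝ᵥ ((gram k xs)⁻¹ *ᵥ fun i => f (xs i))

/-- Noise-free posterior standard deviation in closed form,
`σ(x; xs) = (k(x,x) - k_t(x)ᵀ K⁻¹ k_t(x))^{1/2}` (for the empty family, `k(x,x)^{1/2}`). -/
def postStdInv {X ι : Type*} [Fintype ι] [DecidableEq ι] (k : X → X → ℝ)
    (xs : ι → X) (x : X) : ℝ :=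
  Real.sqrt (k x x - kvec k xs x ⬝ᵥ ((gram k xs)⁻¹ *ᵥ kvec k xs x))

/-- The first `t` points `X_t = (x₁, …, x_t)` of an infinite sequence. -/
def prefN {X : Type*} (xseq : ℕ → X) (t : ℕ) : Fin t → X := fun i => xseq i

lemma gram_posSemidef {X : Type*} (k : X → X → ℝ)
    (hsym : ∀ x y : X, k x y = k y x)
    (hpsd : ∀ (n : ℕ) (xv : Fin n → X) (c : Fin n → ℝ),
      0 ≤ ∑ i, ∑ j, c i * c j * k (xv i) (xv j))
    {n : ℕ} (ys : Fin n → X) : (gram k ys).PosSemidef := by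
  rw [posSemidef_iff_dotProduct_mulVec]
  constructor
  · ext i j
    simp [_root_.gram, IsHermitian, conjTranspose, hsym (ys i) (ys j)]
  · intro c
    have := hpsd n ys c
    simpa [dotProduct, mulVec, _root_.gram, Finset.mul_sum, mul_assoc, mul_comm, mul_left_comm]
      using this


lemma S_posDef {X : Type*} (k : X → X → ℝ)
    (hsym : ∀ x y : X, k x y = k y x)
    (hpsd : ∀ (n : ℕ) (xv : Fin n → X) (c : Fin n → ℝ),
      0 ≤ ∑ i, ∑ j, c i * c j * k (xv i) (xv j))
    {n : ℕ} (ys : Fin n → X) {l : ℝ} (hl : l ≠ 0) :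
    (gram k ys + l ^ 2 • (1 : Matrix (Fin n) (Fin n) ℝ)).PosDef := by
  refine Matrix.PosDef.posSemidef_add (gram_posSemidef k hsym hpsd ys) ?_
  rw [posDef_iff_dotProduct_mulVec]
  constructor
  · ext i j
    simp only [conjTranspose_apply, Matrix.smul_apply, one_apply, star_trivial, smul_eq_mul]
    by_cases h : i = j <;> simp [h, one_apply, eq_comm]
  · intro c hc
    have h1 : (l ^ 2 • (1 : Matrix (Fin n) (Fin n) ℝ)) *ᵥ c = l ^ 2 • c := by
      ext i; simp [mulVec, one_apply, dotProduct]
    rw [h1]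
    have h2 : (0:ℝ) < dotProduct (star c) c := dotProduct_star_self_pos_iff.mpr hc
    have h3 : dotProduct (star c) (l ^ 2 • c) = l ^ 2 * dotProduct (star c) c := by
      simp [dotProduct, Finset.mul_sum, mul_comm, mul_left_comm, mul_assoc]
    rw [h3]
    exact mul_pos (by positivity) h2


lemma det_step {X : Type*} (k : X → X → ℝ)
    (hsym : ∀ x y : X, k x y = k y x)
    (hpsd : ∀ (n : ℕ) (xv : Fin n → X) (c : Fin n → ℝ),
      0 ≤ ∑ i, ∑ j, c i * c j * k (xv i) (xv j))
    {n : ℕ} (ys : Fin (n + 1) → X) {l : ℝ} (hl : l ≠ 0) :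
    (1 + (l ^ 2)⁻¹ • gram k ys).det
      = (1 + (l ^ 2)⁻¹ • gram k (fun i : Fin n => ys i.castSucc)).det
        * (1 + (l ^ 2)⁻¹ * postVar k (fun i : Fin n => ys i.castSucc) l (ys (Fin.last n))) := by
  have hl2 : (l : ℝ) ^ 2 ≠ 0 := pow_ne_zero _ hl
  set z : Fin n → X := fun i => ys i.castSucc with hz
  set x : X := ys (Fin.last n) with hx
  set S : Matrix (Fin n) (Fin n) ℝ := gram k z + l ^ 2 • 1 with hS
  have hSpd : S.PosDef := S_posDef k hsym hpsd z hl
  have hSdet : IsUnit S.det := hSpd.det_pos.ne'.isUnit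
  set A : Matrix (Fin n) (Fin n) ℝ := 1 + (l ^ 2)⁻¹ • gram k z with hA
  have hAS : A = (l ^ 2)⁻¹ • S := by
    rw [hA, hS, smul_add, smul_smul, inv_mul_cancel₀ hl2, one_smul, add_comm]
  have hmul : A * (l ^ 2 • S⁻¹) = 1 := by
    rw [hAS, Matrix.smul_mul, Matrix.mul_smul, smul_smul, inv_mul_cancel₀ hl2, one_smul,
      Matrix.mul_nonsing_inv _ hSdet]
  letI : Invertible A := invertibleOfRightInverse A _ hmul
  have hinv : ⅟A = l ^ 2 • S⁻¹ := by
    rw [invOf_eq_nonsing_inv, Matrix.inv_eq_right_inv hmul]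
  set v : Fin n → ℝ := kvec k z x with hv
  set Bm : Matrix (Fin n) (Fin 1) ℝ := fun i _ => (l ^ 2)⁻¹ * v i with hB
  set Cm : Matrix (Fin 1) (Fin n) ℝ := fun _ j => (l ^ 2)⁻¹ * v j with hC
  set Dm : Matrix (Fin 1) (Fin 1) ℝ := fun _ _ => 1 + (l ^ 2)⁻¹ * k x x with hD
  have e1 : ∀ i : Fin n, (finSumFinEquiv (Sum.inl i) : Fin (n + 1)) = i.castSucc := fun i => rfl
  have e2 : (finSumFinEquiv (Sum.inr (0 : Fin 1)) : Fin (n + 1)) = Fin.last n := by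
    ext; simp
  have hne : ∀ i : Fin n, i.castSucc ≠ Fin.last n := fun i => Fin.castSucc_lt_last i |>.ne
  have hblock : fromBlocks A Bm Cm Dm
      = (1 + (l ^ 2)⁻¹ • gram k ys).submatrix finSumFinEquiv finSumFinEquiv := by
    ext i j
    rcases i with i | i <;> rcases j with j | j
    · simp only [fromBlocks_apply₁₁, submatrix_apply, e1, hA, Matrix.add_apply, Matrix.smul_apply,
        smul_eq_mul, _root_.gram, one_apply, Fin.castSucc_inj]
      rfl
      
    · obtain rfl : j = 0 := Fin.fin_one_eq_zero j
      simp only [fromBlocks_apply₁₂, submatrix_apply, e1, e2, Matrix.add_apply, Matrix.smul_apply,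
        smul_eq_mul, _root_.gram, one_apply, hB]
      rw [if_neg (hne i)]
      simp [hv, kvec, hz, hx]
      rfl
    · obtain rfl : i = 0 := Fin.fin_one_eq_zero i
      simp only [fromBlocks_apply₂₁, submatrix_apply, e1, e2, Matrix.add_apply, Matrix.smul_apply,
        smul_eq_mul, _root_.gram, one_apply, hC]
      rw [if_neg (Ne.symm (hne j))]
      simp [hv, kvec, hz, hx, hsym]
      rfl
    · obtain rfl : i = 0 := Fin.fin_one_eq_zero i
      obtain rfl : j = 0 := Fin.fin_one_eq_zero j
      simp only [fromBlocks_apply₂₂, submatrix_apply, e2, Matrix.add_apply, Matrix.smul_apply,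
        smul_eq_mul, _root_.gram, one_apply, hD, if_pos rfl]
      rfl
  have hdet1 : (1 + (l ^ 2)⁻¹ • gram k ys).det = (fromBlocks A Bm Cm Dm).det := by
    rw [hblock, det_submatrix_equiv_self]
  rw [hdet1, det_fromBlocks₁₁]
  congr 1
  rw [det_fin_one]
  have hCAB : (Cm * ⅟A * Bm) 0 0 = (l ^ 2)⁻¹ * (v ⬝ᵥ S⁻¹ *ᵥ v) := by
    simp only [Matrix.mul_apply]
    simp only [hinv, Matrix.mul_apply, Matrix.smul_apply, smul_eq_mul, dotProduct, mulVec,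
      Finset.sum_mul, Finset.mul_sum, hB, hC]
    rw [Finset.sum_comm]
    refine Finset.sum_congr rfl fun i _ => Finset.sum_congr rfl fun j _ => ?_
    field_simp
  have hsub : (Dm - Cm * ⅟A * Bm) 0 0 = Dm 0 0 - (Cm * ⅟A * Bm) 0 0 := rfl
  rw [hsub, hCAB]
  simp only [hD, postVar]
  ring_nf
  rfl


lemma det_lower {X : Type*} (k : X → X → ℝ)
    (hsym : ∀ x y : X, k x y = k y x)
    (hpsd : ∀ (n : ℕ) (xv : Fin n → X) (c : Fin n → ℝ),
      0 ≤ ∑ i, ∑ j, c i * c j * k (xv i) (xv j))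
    {T : ℕ} (xs : Fin T → X) {l : ℝ} (hl : 0 < l)
    (h : ∀ t : Fin T, l ^ 2 < postVar k (pre xs t) l (xs t)) :
    ∀ t, (ht : t ≤ T) →
      (2 : ℝ) ^ t ≤ (1 + (l ^ 2)⁻¹ • gram k (fun i : Fin t => xs (Fin.castLE ht i))).det := by
  intro t
  induction t with
  | zero =>
    intro ht
    have : (1 + (l ^ 2)⁻¹ • gram k (fun i : Fin 0 => xs (Fin.castLE ht i))).det = 1 :=
      Matrix.det_isEmpty
    rw [this]; norm_num
  | succ t ih =>
    intro ht
    have ht' : t ≤ T := Nat.le_of_succ_le ht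
    have hstep := det_step k hsym hpsd (fun i : Fin (t + 1) => xs (Fin.castLE ht i)) hl.ne'
    have hzz : (fun i : Fin t => (fun i : Fin (t + 1) => xs (Fin.castLE ht i)) i.castSucc)
        = fun i : Fin t => xs (Fin.castLE ht' i) := rfl
    rw [hzz] at hstep
    have hpv : l ^ 2 <
        postVar k (fun i : Fin t => xs (Fin.castLE ht' i)) l
          ((fun i : Fin (t + 1) => xs (Fin.castLE ht i)) (Fin.last t)) := h ⟨t, ht⟩
    have hinvp : (0 : ℝ) < (l ^ 2)⁻¹ := by positivity
    have hfac : (2 : ℝ) ≤ 1 + (l ^ 2)⁻¹ * postVar k (fun i : Fin t => xs (Fin.castLE ht' i)) l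
        ((fun i : Fin (t + 1) => xs (Fin.castLE ht i)) (Fin.last t)) := by
      have h1 : (1 : ℝ) = (l ^ 2)⁻¹ * l ^ 2 := (inv_mul_cancel₀ (by positivity)).symm
      nlinarith
    have hih := ih ht'
    rw [hstep]
    calc (2 : ℝ) ^ (t + 1) = 2 ^ t * 2 := by ring
    _ ≤ _ := mul_le_mul hih hfac (by norm_num) (le_trans (by positivity) hih)


lemma postStd_le_sqrt {X ι : Type*} [Fintype ι] [DecidableEq ι] (k : X → X → ℝ)
    (xs : ι → X) (x : X) {l : ℝ} (hl : 0 < l) :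
    postStd k xs x ≤ Real.sqrt (postVar k xs l x) :=
  ciInf_le ⟨0, by rintro r ⟨a, rfl⟩; exact Real.sqrt_nonneg _⟩ (⟨l, hl⟩ : {l : ℝ // 0 < l})



/-- General upper bound for the minimum posterior standard deviation. -/
theorem min_postStd_le
    {X : Type*} [Nonempty X] (k : X → X → ℝ)
    (hsym : ∀ x y : X, k x y = k y x)
    (hpsd : ∀ (n : ℕ) (xv : Fin n → X) (c : Fin n → ℝ),
      0 ≤ ∑ i, ∑ j, c i * c j * k (xv i) (xv j))
    (Tbar : ℕ) (hTbar : 2 ≤ Tbar) (lam : ℕ → ℝ)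
    (hlam_pos : ∀ t : ℕ, Tbar ≤ t → 0 < lam t)
    (hmig : ∀ t : ℕ, Tbar ≤ t →
      mig k t (lam t) ≤ ENNReal.ofReal (((t : ℝ) - 1) / 3)) :
    ∀ T : ℕ, Tbar ≤ T → ∀ xs : Fin T → X,
      sInf (Set.range fun t : Fin T => postStd k (pre xs t) (xs t)) ≤ lam T := by
  intro T hT xs
  by_contra hcon
  push_neg at hcon
  set l : ℝ := lam T with hldef
  have hl : 0 < l := hlam_pos T hT
  have hT2 : (2 : ℝ) ≤ (T : ℝ) := by exact_mod_cast le_trans hTbar hT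
  have key : ∀ t : Fin T, l ^ 2 < postVar k (pre xs t) l (xs t) := by
    intro t
    have h1 : sInf (Set.range fun t : Fin T => postStd k (pre xs t) (xs t))
        ≤ postStd k (pre xs t) (xs t) :=
      csInf_le (Set.finite_range _).bddBelow ⟨t, rfl⟩
    have h2 : postStd k (pre xs t) (xs t)
        ≤ Real.sqrt (postVar k (pre xs t) l (xs t)) :=
      postStd_le_sqrt k (pre xs t) (xs t) hl
    have h3 : l < Real.sqrt (postVar k (pre xs t) l (xs t)) :=
      lt_of_lt_of_le (lt_of_lt_of_le hcon h1) h2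
    exact (Real.lt_sqrt hl.le).mp h3
  have hdet : (2 : ℝ) ^ T ≤ (1 + (l ^ 2)⁻¹ • gram k xs).det := by
    have := det_lower k hsym hpsd xs hl key T le_rfl
    have hxs : (fun i : Fin T => xs (Fin.castLE le_rfl i)) = xs := rfl
    rwa [hxs] at this
  have hmig1 : ENNReal.ofReal ((1 / 2) * Real.log ((1 + (l ^ 2)⁻¹ • gram k xs).det))
      ≤ mig k T l := by
    rw [mig]
    exact le_iSup (fun ys : Fin T → X =>
      ENNReal.ofReal ((1 / 2) * Real.log ((1 + (l ^ 2)⁻¹ • gram k ys).det))) xs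
  have hle : (1 / 2) * Real.log ((1 + (l ^ 2)⁻¹ • gram k xs).det) ≤ ((T : ℝ) - 1) / 3 := by
    have h4 := le_trans hmig1 (hmig T hT)
    rwa [ENNReal.ofReal_le_ofReal_iff (by linarith)] at h4
  have hlog : (T : ℝ) * Real.log 2 ≤ Real.log ((1 + (l ^ 2)⁻¹ • gram k xs).det) := by
    have := Real.log_le_log (by positivity) hdet
    rwa [Real.log_pow] at this
  nlinarith [Real.log_two_gt_d9, hT2, hle, hlog]
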